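/- arXiv:1202.1033 — 3 statements merged into one kernel-verified Lean document; each statement's English description precedes it below -/
import Mathlib

section
/- Let N ≥ 2 and let a, b, c : Fin (N−1) → ℝ with a_j ≠ 0, b_j ≠ 0 and c_j ≠ 0 for every j. Let H_0 be the XYZ chain Hamiltonian of length N with couplings a, b, c (this includes the XXZ case a_j = b_j), and let H_1 = Z_1, H_2 = X_1 be two controls on the end spin. Then the dynamical Lie algebra generated by H_0, H_1, H_2 equals su(2^N), the set of all traceless skew-Hermitian 2^N × 2^N complex matrices; i.e., the system is fully controllable. -/
open Matrix Complex Finset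

attribute [local instance 100] LieRing.ofAssociativeRing

/-- The Pauli X matrix. -/
noncomputable def PauliX : Matrix (Fin 2) (Fin 2) ℂ := !![0, 1; 1, 0]
/-- The Pauli Y matrix. -/
noncomputable def PauliY : Matrix (Fin 2) (Fin 2) ℂ := !![0, -Complex.I; Complex.I, 0]
/-- The Pauli Z matrix. -/
noncomputable def PauliZ : Matrix (Fin 2) (Fin 2) ℂ := !![1, 0; 0, -1]

/-- Tensor product of `N` single-qubit matrices: the entry at `(x, y)` is `∏ j, (P j) (x j) (y j)`. -/
noncomputable def kronN {N : ℕ} (P : Fin N → Matrix (Fin 2) (Fin 2) ℂ) :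
    Matrix (Fin N → Fin 2) (Fin N → Fin 2) ℂ :=
  Matrix.of fun x y => ∏ j, P j (x j) (y j)

/-- The single-qubit operator `R` acting on site `k`, identity elsewhere. -/
noncomputable def localOp {N : ℕ} (k : Fin N) (R : Matrix (Fin 2) (Fin 2) ℂ) :
    Matrix (Fin N → Fin 2) (Fin N → Fin 2) ℂ :=
  kronN (fun m => if m = k then R else 1)

/-- The two-site operator with `R` at site `j`, `R'` at site `k`, identity elsewhere. -/
noncomputable def twoOp {N : ℕ} (j k : Fin N) (R R' : Matrix (Fin 2) (Fin 2) ℂ) :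
    Matrix (Fin N → Fin 2) (Fin N → Fin 2) ℂ :=
  kronN (fun m => if m = j then R else if m = k then R' else 1)

/-- Left site of the `j`-th bond of a chain of length `N`. -/
def siteL {N : ℕ} (j : Fin (N - 1)) : Fin N := ⟨j.val, by have := j.isLt; omega⟩
/-- Right site of the `j`-th bond of a chain of length `N`. -/
def siteR {N : ℕ} (j : Fin (N - 1)) : Fin N := ⟨j.val + 1, by have := j.isLt; omega⟩

/-- The XYZ chain Hamiltonian of length `N` with couplings `a b c : Fin (N-1) → ℝ`:
`H₀ = Σ_j (a_j X_j X_{j+1} + b_j Y_j Y_{j+1} + c_j Z_j Z_{j+1})`. -/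
noncomputable def xyzChain (N : ℕ) (a b c : Fin (N - 1) → ℝ) :
    Matrix (Fin N → Fin 2) (Fin N → Fin 2) ℂ :=
  ∑ j : Fin (N - 1),
    ((a j : ℂ) • twoOp (siteL j) (siteR j) PauliX PauliX +
     (b j : ℂ) • twoOp (siteL j) (siteR j) PauliY PauliY +
     (c j : ℂ) • twoOp (siteL j) (siteR j) PauliZ PauliZ)

/-- The XX chain Hamiltonian of length `N` with couplings `γ : Fin (N-1) → ℝ`:
`H₀ = Σ_j γ_j (X_j X_{j+1} + Y_j Y_{j+1})`. -/
noncomputable def xxChain (N : ℕ) (γ : Fin (N - 1) → ℝ) :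
    Matrix (Fin N → Fin 2) (Fin N → Fin 2) ℂ :=
  ∑ j : Fin (N - 1),
    (γ j : ℂ) • (twoOp (siteL j) (siteR j) PauliX PauliX +
                 twoOp (siteL j) (siteR j) PauliY PauliY)
namespace XYZ

def pmulN : ℕ → ℕ → Fin 4
  | 0, b => Fin.ofNat 4 b
  | 1, 0 => 1 | 1, 2 => 3 | 1, 3 => 2
  | 2, 0 => 2 | 2, 1 => 3 | 2, 3 => 1
  | 3, 0 => 3 | 3, 1 => 2 | 3, 2 => 1
  | _, _ => 0

def pexpN : ℕ → ℕ → ℕ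
  | 1, 2 => 1 | 1, 3 => 3
  | 2, 1 => 3 | 2, 3 => 1
  | 3, 1 => 1 | 3, 2 => 3
  | _, _ => 0

def pmul (a b : Fin 4) : Fin 4 := pmulN a.val b.val
def pexp (a b : Fin 4) : ℕ := pexpN a.val b.val

noncomputable def σpN : ℕ → Matrix (Fin 2) (Fin 2) ℂ
  | 0 => 1 | 1 => PauliX | 2 => PauliY | _ => PauliZ

noncomputable def σp (a : Fin 4) : Matrix (Fin 2) (Fin 2) ℂ := σpN a.val

lemma σp_mul (a b : Fin 4) : σp a * σp b = (Complex.I ^ pexp a b) • σp (pmul a b) := by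
  fin_cases a <;> fin_cases b <;>
    · ext i j
      fin_cases i <;> fin_cases j <;>
        simp [σp, σpN, pmul, pmulN, pexp, pexpN, PauliX, PauliY, PauliZ,
          Matrix.one_fin_two, Matrix.mul_apply, Fin.sum_univ_two, Fin.ofNat,
          pow_succ, Complex.I_sq] <;> ring

lemma pmul_comm : ∀ a b : Fin 4, pmul a b = pmul b a := by decide

lemma pexp_self : ∀ a : Fin 4, pexp a a = 0 := by decide
lemma pexp_zero_left : ∀ b : Fin 4, pexp 0 b = 0 := by decide
lemma pexp_zero_right : ∀ a : Fin 4, pexp a 0 = 0 := by decide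
lemma pmul_zero_right : ∀ a : Fin 4, pmul a 0 = a := by decide
lemma pmul_zero_left : ∀ b : Fin 4, pmul 0 b = b := by decide
lemma pmul_self : ∀ a : Fin 4, pmul a a = 0 := by decide

lemma σp_herm (a : Fin 4) : (σp a)ᴴ = σp a := by
  fin_cases a <;>
    · ext i j
      fin_cases i <;> fin_cases j <;>
        simp [σp, σpN, PauliX, PauliY, PauliZ, Matrix.one_fin_two]

lemma σp_trace (a : Fin 4) : (σp a).trace = if a = 0 then 2 else 0 := by
  fin_cases a <;>
    norm_num [σp, σpN, PauliX, PauliY, PauliZ, Matrix.trace_fin_two, Matrix.one_fin_two, Fin.ext_iff]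

lemma site_flip (a b : Fin 4) :
    (Complex.I : ℂ) ^ pexp b a = (-1 : ℂ) ^ pexp a b * Complex.I ^ pexp a b := by
  fin_cases a <;> fin_cases b <;>
    norm_num [pexp, pexpN, pow_succ, Complex.I_sq]

lemma site_complete (i j k l : Fin 2) :
    ∑ a : Fin 4, σp a i j * σp a k l = if i = l ∧ j = k then 2 else 0 := by
  fin_cases i <;> fin_cases j <;> fin_cases k <;> fin_cases l <;>
    simp [σp, σpN, PauliX, PauliY, PauliZ, Matrix.one_fin_two, Fin.sum_univ_four,
      pow_succ, Complex.I_sq] <;> ring_nf <;> simp [Complex.I_sq] <;> ring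

end XYZ
namespace XYZ

variable {N : ℕ}

lemma kronN_mul (P Q : Fin N → Matrix (Fin 2) (Fin 2) ℂ) :
    kronN P * kronN Q = kronN (fun j => P j * Q j) := by
  ext x y
  simp only [kronN, Matrix.mul_apply, Matrix.of_apply]
  rw [Finset.prod_univ_sum, Fintype.piFinset_univ]
  exact Finset.sum_congr rfl fun z _ => (Finset.prod_mul_distrib).symm

lemma kronN_smul (c : Fin N → ℂ) (P : Fin N → Matrix (Fin 2) (Fin 2) ℂ) :
    kronN (fun j => c j • P j) = (∏ j, c j) • kronN P := by
  ext x y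
  simp only [kronN, Matrix.of_apply, Matrix.smul_apply, Matrix.smul_apply, smul_eq_mul]
  rw [← Finset.prod_mul_distrib]

lemma kronN_one : kronN (fun _ : Fin N => (1 : Matrix (Fin 2) (Fin 2) ℂ)) = 1 := by
  ext x y
  by_cases h : x = y
  · subst h; simp [kronN, Matrix.one_apply]
  · obtain ⟨j, hj⟩ := Function.ne_iff.mp h
    rw [kronN, Matrix.of_apply, Finset.prod_eq_zero (Finset.mem_univ j) (by
      simp [Matrix.one_apply, hj]), Matrix.one_apply_ne h]

lemma kronN_herm (P : Fin N → Matrix (Fin 2) (Fin 2) ℂ) (h : ∀ j, (P j)ᴴ = P j) :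
    (kronN P)ᴴ = kronN P := by
  ext x y
  simp only [kronN, Matrix.conjTranspose_apply, Matrix.of_apply, star_prod]
  exact Finset.prod_congr rfl fun j _ => by
    rw [← Matrix.conjTranspose_apply, h j]

lemma kronN_trace (P : Fin N → Matrix (Fin 2) (Fin 2) ℂ) :
    (kronN P).trace = ∏ j, (P j).trace := by
  simp only [Matrix.trace, Matrix.diag, kronN, Matrix.of_apply]
  rw [Finset.prod_univ_sum, Fintype.piFinset_univ]

/-- Pauli string indexed by `s : Fin N → Fin 4`. -/
noncomputable def Pstr (s : Fin N → Fin 4) : Matrix (Fin N → Fin 2) (Fin N → Fin 2) ℂ :=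
  kronN (fun j => σp (s j))

/-- site-wise product of Pauli strings. -/
def smulS (s t : Fin N → Fin 4) : Fin N → Fin 4 := fun j => pmul (s j) (t j)

/-- total phase exponent. -/
def DD (s t : Fin N → Fin 4) : ℕ := ∑ j, pexp (s j) (t j)

lemma Pstr_mul (s t : Fin N → Fin 4) :
    Pstr s * Pstr t = (Complex.I ^ DD s t) • Pstr (smulS s t) := by
  rw [Pstr, Pstr, kronN_mul]
  have : (fun j => σp (s j) * σp (t j)) =
      fun j => (Complex.I ^ pexp (s j) (t j)) • σp (pmul (s j) (t j)) :=
    funext fun j => σp_mul _ _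
  rw [this, kronN_smul, Finset.prod_pow_eq_pow_sum]
  rfl

lemma Pstr_herm (s : Fin N → Fin 4) : (Pstr s)ᴴ = Pstr s :=
  kronN_herm _ fun j => σp_herm _

lemma Pstr_zero : Pstr (fun _ : Fin N => (0 : Fin 4)) = 1 := by
  rw [Pstr]; exact kronN_one

lemma Pstr_trace (s : Fin N → Fin 4) (hs : s ≠ 0) : (Pstr s).trace = 0 := by
  obtain ⟨j, hj⟩ := Function.ne_iff.mp hs
  rw [Pstr, kronN_trace]
  refine Finset.prod_eq_zero (Finset.mem_univ j) ?_
  rw [σp_trace, if_neg (by simpa using hj)]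

end XYZ
namespace XYZ

variable {N : ℕ}

lemma smulS_comm (s t : Fin N → Fin 4) : smulS t s = smulS s t :=
  funext fun j => pmul_comm _ _

lemma Ipow_flip (s t : Fin N → Fin 4) :
    (Complex.I : ℂ) ^ DD t s = (-1 : ℂ) ^ DD s t * Complex.I ^ DD s t := by
  rw [DD, DD, ← Finset.prod_pow_eq_pow_sum, ← Finset.prod_pow_eq_pow_sum,
    ← Finset.prod_pow_eq_pow_sum, ← Finset.prod_mul_distrib]
  exact Finset.prod_congr rfl fun j _ => site_flip _ _

/-- The real coefficient in the bracket of two (i times) Pauli strings. -/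
noncomputable def Rcoef (s t : Fin N → Fin 4) : ℝ :=
  if Even (DD s t) then 0 else (-2) * (-1) ^ (DD s t / 2)

lemma Rcoef_ne_zero (s t : Fin N → Fin 4) (h : ¬ Even (DD s t)) : Rcoef s t ≠ 0 := by
  rw [Rcoef, if_neg h]
  positivity

lemma Br_eq (s t : Fin N → Fin 4) :
    ⁅Complex.I • Pstr s, Complex.I • Pstr t⁆
      = Rcoef s t • (Complex.I • Pstr (smulS s t)) := by
  rw [Ring.lie_def, smul_mul_assoc, smul_mul_assoc, mul_smul_comm, mul_smul_comm,
    Pstr_mul s t, Pstr_mul t s, smulS_comm s t, Ipow_flip s t,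
    ← algebraMap_smul (R := ℝ) ℂ (Rcoef s t) (Complex.I • Pstr (smulS s t))]
  simp only [smul_smul, ← sub_smul, Complex.coe_algebraMap]
  congr 1
  by_cases h : Even (DD s t)
  · obtain ⟨m, hm⟩ := h
    rw [Rcoef, if_pos ⟨m, hm⟩]
    have : (-1 : ℂ) ^ DD s t = 1 := by
      rw [hm, ← two_mul]; rw [pow_mul]; norm_num
    rw [this]
    push_cast
    ring
  · obtain ⟨m, hm⟩ := Nat.odd_iff.mpr (Nat.not_even_iff.mp h)
    rw [Rcoef, if_neg h]
    have h1 : (-1 : ℂ) ^ DD s t = -1 := by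
      rw [hm, pow_succ, pow_mul]; norm_num
    have h2 : (Complex.I : ℂ) ^ DD s t = (-1) ^ m * Complex.I := by
      rw [hm, pow_succ, pow_mul, Complex.I_sq]
    have h3 : DD s t / 2 = m := by omega
    rw [h1, h2, h3]
    push_cast
    ring_nf
    have h4 : Complex.I ^ 3 = -Complex.I := by
      have := pow_succ Complex.I 2
      rw [Complex.I_sq] at this
      simpa using this
    rw [h4]
    ring

end XYZ
namespace XYZ

variable {N : ℕ}

/-- `su(2^N)` as a real Lie subalgebra. -/
noncomputable def suN (N : ℕ) :
    LieSubalgebra ℝ (Matrix (Fin N → Fin 2) (Fin N → Fin 2) ℂ) where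
  carrier := {M | Mᴴ = -M ∧ M.trace = 0}
  add_mem' := fun hx hy => ⟨by rw [Matrix.conjTranspose_add, hx.1, hy.1, neg_add],
    by rw [Matrix.trace_add, hx.2, hy.2, add_zero]⟩
  zero_mem' := ⟨by simp, by simp⟩
  smul_mem' := fun r x hx => ⟨by rw [Matrix.conjTranspose_smul, hx.1, star_trivial, smul_neg],
    by rw [Matrix.trace_smul, hx.2, smul_zero]⟩
  lie_mem' := fun {x y} hx hy => by
    refine ⟨?_, by rw [Ring.lie_def, Matrix.trace_sub, Matrix.trace_mul_comm, sub_self]⟩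
    rw [Ring.lie_def, Matrix.conjTranspose_sub, Matrix.conjTranspose_mul,
      Matrix.conjTranspose_mul, hx.1, hy.1]
    simp only [Matrix.neg_mul, Matrix.mul_neg, neg_neg, neg_sub]

lemma prod_ite_complete (x y z w : Fin N → Fin 2) :
    (∏ j, if z j = y j ∧ w j = x j then (2:ℂ) else 0)
      = if z = y ∧ w = x then (2:ℂ)^N else 0 := by
  by_cases h : z = y ∧ w = x
  · obtain ⟨h1, h2⟩ := h
    subst h1; subst h2
    simp [Finset.prod_const, Finset.card_univ]
  · rw [if_neg h]
    have : ∃ j, ¬(z j = y j ∧ w j = x j) := by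
      by_contra hc
      push_neg at hc
      exact h ⟨funext fun j => (hc j).1, funext fun j => (hc j).2⟩
    obtain ⟨j, hj⟩ := this
    exact Finset.prod_eq_zero (Finset.mem_univ j) (if_neg hj)

lemma Pstr_complete (M : Matrix (Fin N → Fin 2) (Fin N → Fin 2) ℂ) :
    ∑ s : Fin N → Fin 4, (Pstr s * M).trace • Pstr s = ((2:ℂ)^N) • M := by
  ext x y
  have key : ∀ z w : Fin N → Fin 2,
      (∑ s : Fin N → Fin 4,
        (∏ j, σp (s j) (z j) (w j)) * ∏ j, σp (s j) (x j) (y j))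
        = if z = y ∧ w = x then (2:ℂ)^N else 0 := by
    intro z w
    have h1 : ∀ s : Fin N → Fin 4,
        (∏ j, σp (s j) (z j) (w j)) * ∏ j, σp (s j) (x j) (y j)
          = ∏ j, (σp (s j) (z j) (w j) * σp (s j) (x j) (y j)) :=
      fun s => (Finset.prod_mul_distrib).symm
    simp_rw [h1]
    rw [← Fintype.piFinset_univ]
    have h2 := Finset.prod_univ_sum (fun _ : Fin N => (Finset.univ : Finset (Fin 4)))
      (fun j a => σp a (z j) (w j) * σp a (x j) (y j))
    rw [← h2]
    simp_rw [site_complete]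
    exact prod_ite_complete x y z w
  simp only [Matrix.sum_apply, Matrix.smul_apply, smul_eq_mul, Matrix.trace,
    Matrix.diag, Matrix.mul_apply, Pstr, kronN, Matrix.of_apply]
  calc
    ∑ s : Fin N → Fin 4,
        (∑ z, ∑ w, (∏ j, σp (s j) (z j) (w j)) * M w z) * ∏ j, σp (s j) (x j) (y j)
      = ∑ z, ∑ w, M w z * ∑ s : Fin N → Fin 4,
          (∏ j, σp (s j) (z j) (w j)) * ∏ j, σp (s j) (x j) (y j) := by
        simp_rw [Finset.sum_mul, Finset.mul_sum]
        rw [Finset.sum_comm]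
        refine Finset.sum_congr rfl fun z _ => ?_
        rw [Finset.sum_comm]
        refine Finset.sum_congr rfl fun w _ => Finset.sum_congr rfl fun s _ => by ring
    _ = ∑ z, ∑ w, M w z * if z = y ∧ w = x then (2:ℂ)^N else 0 := by
        simp_rw [key]
    _ = (2:ℂ)^N * M x y := by
        rw [Finset.sum_eq_single y]
        · rw [Finset.sum_eq_single x]
          · simp [mul_comm]
          · intro w _ hw; simp [hw]
          · intro hx; exact absurd (Finset.mem_univ x) hx
        · intro z _ hz; simp [hz]
        · intro hy; exact absurd (Finset.mem_univ y) hy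

lemma mem_of_su {g : LieSubalgebra ℝ (Matrix (Fin N → Fin 2) (Fin N → Fin 2) ℂ)}
    (hg : ∀ s : Fin N → Fin 4, s ≠ 0 → Complex.I • Pstr s ∈ g)
    (M : Matrix (Fin N → Fin 2) (Fin N → Fin 2) ℂ)
    (h1 : Mᴴ = -M) (h2 : M.trace = 0) : M ∈ g := by
  have him : ∀ s : Fin N → Fin 4, ((Pstr s * M).trace).re = 0 := by
    intro s
    have hstar : star ((Pstr s * M).trace) = -((Pstr s * M).trace) := by
      have : star ((Pstr s * M).trace) = ((Pstr s * M)ᴴ).trace := by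
        rw [Matrix.trace_conjTranspose]
      rw [this, Matrix.conjTranspose_mul, Pstr_herm, h1, Matrix.neg_mul,
        Matrix.trace_neg, Matrix.trace_mul_comm]
    have := congrArg Complex.re hstar
    simp only [Complex.star_def, Complex.conj_re, Complex.neg_re] at this
    linarith
  have hsum : ∑ s : Fin N → Fin 4, (Pstr s * M).trace • Pstr s ∈ g := by
    refine Submodule.sum_mem g.toSubmodule fun s _ => ?_
    by_cases hs : s = 0
    · subst hs
      have : Pstr (0 : Fin N → Fin 4) * M = M := by
        have : Pstr (0 : Fin N → Fin 4) = 1 := Pstr_zero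
        rw [this, one_mul]
      rw [this, h2, zero_smul]
      exact Submodule.zero_mem g.toSubmodule
    · have hc : (Pstr s * M).trace = (((Pstr s * M).trace).im : ℂ) * Complex.I := by
        have := Complex.re_add_im ((Pstr s * M).trace)
        rw [him s] at this
        simpa using this.symm
      rw [hc, mul_smul, Complex.coe_smul]
      exact Submodule.smul_mem g.toSubmodule _ (hg s hs)
  have hM : M = ((2:ℝ)^N)⁻¹ • (∑ s : Fin N → Fin 4, (Pstr s * M).trace • Pstr s) := by
    rw [Pstr_complete]
    have h2N : ((2:ℂ)^N) • M = ((2:ℝ)^N) • M := by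
      rw [← algebraMap_smul (R := ℝ) ℂ ((2:ℝ)^N) M]
      norm_num
    rw [h2N, smul_smul]
    norm_num
  rw [hM]
  exact Submodule.smul_mem g.toSubmodule _ hsum

end XYZ
namespace XYZ

variable {N : ℕ}

/-- String with `A` at `κ₁`, `B` at `κ₂`, background `P` elsewhere. -/
def str2 (κ₁ κ₂ : Fin N) (A B : Fin 4) (P : Fin N → Fin 4) : Fin N → Fin 4 :=
  fun m => if m = κ₁ then A else if m = κ₂ then B else P m

variable {κ₁ κ₂ : Fin N}

lemma str2_fst (A B : Fin 4) (P : Fin N → Fin 4) : str2 κ₁ κ₂ A B P κ₁ = A := if_pos rfl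

lemma str2_snd (hne : κ₁ ≠ κ₂) (A B : Fin 4) (P : Fin N → Fin 4) :
    str2 κ₁ κ₂ A B P κ₂ = B := by
  rw [str2, if_neg (fun h => hne h.symm), if_pos rfl]

lemma str2_ne_zero_fst {A : Fin 4} (hA : A ≠ 0) (B : Fin 4) (P : Fin N → Fin 4) :
    str2 κ₁ κ₂ A B P ≠ 0 := fun h => hA (by
  have := congrFun h κ₁
  rwa [str2_fst, Pi.zero_apply] at this)

lemma str2_ne_zero_snd (hne : κ₁ ≠ κ₂) {B : Fin 4} (hB : B ≠ 0) (A : Fin 4)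
    (P : Fin N → Fin 4) : str2 κ₁ κ₂ A B P ≠ 0 := fun h => hB (by
  have := congrFun h κ₂
  rwa [str2_snd hne, Pi.zero_apply] at this)

lemma DD_str2 (hne : κ₁ ≠ κ₂) (A B A' B' : Fin 4) (P : Fin N → Fin 4) :
    DD (str2 κ₁ κ₂ A B P) (str2 κ₁ κ₂ A' B' 0) = pexp A A' + pexp B B' := by
  rw [DD, ← Finset.sum_subset (Finset.subset_univ ({κ₁, κ₂} : Finset (Fin N)))
    (fun m _ hm => by
      simp only [Finset.mem_insert, Finset.mem_singleton, not_or] at hm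
      have h2 : str2 κ₁ κ₂ A' B' 0 m = 0 := by
        rw [str2, if_neg hm.1, if_neg hm.2, Pi.zero_apply]
      rw [h2, pexp_zero_right])]
  rw [Finset.sum_pair hne, str2_fst, str2_fst, str2_snd hne, str2_snd hne]

lemma DD_str2' (hne : κ₁ ≠ κ₂) (A B A' B' : Fin 4) (P : Fin N → Fin 4) :
    DD (str2 κ₁ κ₂ A B 0) (str2 κ₁ κ₂ A' B' P) = pexp A A' + pexp B B' := by
  rw [DD, ← Finset.sum_subset (Finset.subset_univ ({κ₁, κ₂} : Finset (Fin N)))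
    (fun m _ hm => by
      simp only [Finset.mem_insert, Finset.mem_singleton, not_or] at hm
      have h2 : str2 κ₁ κ₂ A B 0 m = 0 := by
        rw [str2, if_neg hm.1, if_neg hm.2, Pi.zero_apply]
      rw [h2, pexp_zero_left])]
  rw [Finset.sum_pair hne, str2_fst, str2_fst, str2_snd hne, str2_snd hne]

lemma smulS_str2 (hne : κ₁ ≠ κ₂) (A B A' B' : Fin 4) (P : Fin N → Fin 4) :
    smulS (str2 κ₁ κ₂ A B P) (str2 κ₁ κ₂ A' B' 0)
      = str2 κ₁ κ₂ (pmul A A') (pmul B B') P := by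
  funext m
  by_cases h1 : m = κ₁
  · subst h1; simp only [smulS, str2_fst]
  · by_cases h2 : m = κ₂
    · subst h2; simp only [smulS, str2_snd hne]
    · simp only [smulS, str2, if_neg h1, if_neg h2, Pi.zero_apply, pmul_zero_right]

lemma smulS_str2' (hne : κ₁ ≠ κ₂) (A B A' B' : Fin 4) (P : Fin N → Fin 4) :
    smulS (str2 κ₁ κ₂ A B 0) (str2 κ₁ κ₂ A' B' P)
      = str2 κ₁ κ₂ (pmul A A') (pmul B B') P := by
  funext m
  by_cases h1 : m = κ₁
  · subst h1; simp only [smulS, str2_fst]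
  · by_cases h2 : m = κ₂
    · subst h2; simp only [smulS, str2_snd hne]
    · simp only [smulS, str2, if_neg h1, if_neg h2, Pi.zero_apply, pmul_zero_left]

lemma Rcoef_even {s t : Fin N → Fin 4} (he : Even (DD s t)) : Rcoef s t = 0 := by
  rw [Rcoef, if_pos he]

lemma DD_self (s : Fin N → Fin 4) : DD s s = 0 :=
  Finset.sum_eq_zero fun j _ => pexp_self _

lemma pmul_eq_zero_iff : ∀ a b : Fin 4, pmul a b = 0 ↔ a = b := by decide

lemma smulS_eq_zero {s t : Fin N → Fin 4} (h : smulS s t = 0) : s = t :=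
  funext fun m => (pmul_eq_zero_iff _ _).mp (congrFun h m)

section InG

variable (g : LieSubalgebra ℝ (Matrix (Fin N → Fin 2) (Fin N → Fin 2) ℂ))

lemma InG_mul {s t : Fin N → Fin 4} (hs : Complex.I • Pstr s ∈ g)
    (ht : Complex.I • Pstr t ∈ g) (hodd : ¬ Even (DD s t)) :
    Complex.I • Pstr (smulS s t) ∈ g := by
  have hb := g.lie_mem hs ht
  rw [Br_eq] at hb
  have h2 := g.smul_mem (Rcoef s t)⁻¹ hb
  rwa [smul_smul, inv_mul_cancel₀ (Rcoef_ne_zero s t hodd), one_smul] at h2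

lemma kill2 {z u v : Fin N → Fin 4} {ru rv : ℝ}
    (hz : Complex.I • Pstr z ∈ g)
    (hsum : ru • (Complex.I • Pstr u) + rv • (Complex.I • Pstr v) ∈ g)
    (heu : Even (DD z u)) (hov : ¬ Even (DD z v)) (hrv : rv ≠ 0) :
    Complex.I • Pstr (smulS z v) ∈ g := by
  have hb := g.lie_mem hz hsum
  rw [lie_add, lie_smul ru, lie_smul rv, Br_eq, Br_eq, Rcoef_even heu, zero_smul,
    smul_zero, zero_add, smul_smul] at hb
  have h2 := g.smul_mem (rv * Rcoef z v)⁻¹ hb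
  rwa [smul_smul, inv_mul_cancel₀ (mul_ne_zero hrv (Rcoef_ne_zero _ _ hov)),
    one_smul] at h2

end InG

end XYZ
namespace XYZ

variable {N : ℕ}

lemma kill2' (g : LieSubalgebra ℝ (Matrix (Fin N → Fin 2) (Fin N → Fin 2) ℂ))
    {z u v : Fin N → Fin 4} {ru rv : ℝ}
    (hz : Complex.I • Pstr z ∈ g)
    (hsum : ru • (Complex.I • Pstr u) + rv • (Complex.I • Pstr v) ∈ g)
    (hou : ¬ Even (DD z u)) (hev : Even (DD z v)) (hru : ru ≠ 0) :
    Complex.I • Pstr (smulS z u) ∈ g := by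
  have hb := g.lie_mem hz hsum
  rw [lie_add, lie_smul ru, lie_smul rv, Br_eq, Br_eq, Rcoef_even hev, zero_smul,
    smul_zero, add_zero, smul_smul] at hb
  have h2 := g.smul_mem (ru * Rcoef z u)⁻¹ hb
  rwa [smul_smul, inv_mul_cancel₀ (mul_ne_zero hru (Rcoef_ne_zero _ _ hou)),
    one_smul] at h2

set_option maxHeartbeats 2000000 in
lemma step_core (g : LieSubalgebra ℝ (Matrix (Fin N → Fin 2) (Fin N → Fin 2) ℂ))
    (κ₁ κ₂ : Fin N) (hne : κ₁ ≠ κ₂) (a₀ b₀ c₀ : ℝ)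
    (ha₀ : a₀ ≠ 0) (hb₀ : b₀ ≠ 0) (hc₀ : c₀ ≠ 0)
    (Good : (Fin N → Fin 4) → Prop) (hG0 : Good 0)
    (hmem : ∀ P, Good P → ∀ A : Fin 4, A ≠ 0 → Complex.I • Pstr (str2 κ₁ κ₂ A 0 P) ∈ g)
    (hT : ∀ P, Good P → ∀ A : Fin 4, A ≠ 0 →
      a₀ • ⁅Complex.I • Pstr (str2 κ₁ κ₂ A 0 P), Complex.I • Pstr (str2 κ₁ κ₂ 1 1 0)⁆
      + b₀ • ⁅Complex.I • Pstr (str2 κ₁ κ₂ A 0 P), Complex.I • Pstr (str2 κ₁ κ₂ 2 2 0)⁆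
      + c₀ • ⁅Complex.I • Pstr (str2 κ₁ κ₂ A 0 P), Complex.I • Pstr (str2 κ₁ κ₂ 3 3 0)⁆
        ∈ g) :
    ∀ P, Good P → ∀ A B : Fin 4, B ≠ 0 → Complex.I • Pstr (str2 κ₁ κ₂ A B P) ∈ g := by
  have hbr : ∀ (Q : Fin N → Fin 4) (A' t : Fin 4),
      ⁅Complex.I • Pstr (str2 κ₁ κ₂ A' 0 Q), Complex.I • Pstr (str2 κ₁ κ₂ t t 0)⁆
        = (if Even (pexp A' t) then (0:ℝ) else (-2) * (-1) ^ (pexp A' t / 2))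
            • (Complex.I • Pstr (str2 κ₁ κ₂ (pmul A' t) t Q)) := by
    intro Q A' t
    rw [Br_eq, smulS_str2 hne, pmul_zero_left]
    congr 1
    rw [Rcoef, DD_str2 hne, pexp_zero_left, add_zero]
  -- the V-sums for A' = 1, 2, 3
  have hV1 : ∀ Q, Good Q →
      (b₀ * -2) • (Complex.I • Pstr (str2 κ₁ κ₂ 3 2 Q))
        + (c₀ * 2) • (Complex.I • Pstr (str2 κ₁ κ₂ 2 3 Q)) ∈ g := by
    intro Q hQ
    have hV := hT Q hQ 1 (by decide)
    rw [hbr Q 1 1, hbr Q 1 2, hbr Q 1 3,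
      show pexp 1 1 = 0 from by decide, show pexp 1 2 = 1 from by decide,
      show pexp 1 3 = 3 from by decide,
      show pmul 1 1 = 0 from by decide, show pmul 1 2 = 3 from by decide,
      show pmul 1 3 = 2 from by decide,
      if_pos (by decide : Even 0), if_neg (by decide : ¬ Even 1),
      if_neg (by decide : ¬ Even 3),
      show ((-2:ℝ)) * (-1) ^ (1 / 2) = -2 from by norm_num,
      show ((-2:ℝ)) * (-1) ^ (3 / 2) = 2 from by norm_num,
      zero_smul, smul_zero, zero_add, smul_smul, smul_smul] at hV
    exact hV
  have hV2 : ∀ Q, Good Q →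
      (a₀ * 2) • (Complex.I • Pstr (str2 κ₁ κ₂ 3 1 Q))
        + (c₀ * -2) • (Complex.I • Pstr (str2 κ₁ κ₂ 1 3 Q)) ∈ g := by
    intro Q hQ
    have hV := hT Q hQ 2 (by decide)
    rw [hbr Q 2 1, hbr Q 2 2, hbr Q 2 3,
      show pexp 2 1 = 3 from by decide, show pexp 2 2 = 0 from by decide,
      show pexp 2 3 = 1 from by decide,
      show pmul 2 1 = 3 from by decide, show pmul 2 2 = 0 from by decide,
      show pmul 2 3 = 1 from by decide,
      if_pos (by decide : Even 0), if_neg (by decide : ¬ Even 1),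
      if_neg (by decide : ¬ Even 3),
      show ((-2:ℝ)) * (-1) ^ (1 / 2) = -2 from by norm_num,
      show ((-2:ℝ)) * (-1) ^ (3 / 2) = 2 from by norm_num,
      zero_smul, smul_zero, add_zero, smul_smul, smul_smul] at hV
    exact hV
  have hV3 : ∀ Q, Good Q →
      (a₀ * -2) • (Complex.I • Pstr (str2 κ₁ κ₂ 2 1 Q))
        + (b₀ * 2) • (Complex.I • Pstr (str2 κ₁ κ₂ 1 2 Q)) ∈ g := by
    intro Q hQ
    have hV := hT Q hQ 3 (by decide)
    rw [hbr Q 3 1, hbr Q 3 2, hbr Q 3 3,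
      show pexp 3 1 = 1 from by decide, show pexp 3 2 = 3 from by decide,
      show pexp 3 3 = 0 from by decide,
      show pmul 3 1 = 2 from by decide, show pmul 3 2 = 1 from by decide,
      show pmul 3 3 = 0 from by decide,
      if_pos (by decide : Even 0), if_neg (by decide : ¬ Even 1),
      if_neg (by decide : ¬ Even 3),
      show ((-2:ℝ)) * (-1) ^ (1 / 2) = -2 from by norm_num,
      show ((-2:ℝ)) * (-1) ^ (3 / 2) = 2 from by norm_num,
      zero_smul, smul_zero, add_zero, smul_smul, smul_smul] at hV
    exact hV
  -- six seed families
  have h31 : ∀ Q, Good Q → Complex.I • Pstr (str2 κ₁ κ₂ 3 1 Q) ∈ g := by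
    intro Q hQ
    have hk := kill2' g (hmem 0 hG0 1 (by decide)) (hV3 Q hQ)
      (by rw [DD_str2' hne]; decide) (by rw [DD_str2' hne]; decide)
      (mul_ne_zero ha₀ (by norm_num))
    rwa [smulS_str2' hne, show pmul 1 2 = 3 from by decide,
      show pmul 0 1 = 1 from by decide] at hk
  have h32 : ∀ Q, Good Q → Complex.I • Pstr (str2 κ₁ κ₂ 3 2 Q) ∈ g := by
    intro Q hQ
    have hk := kill2 g (hmem 0 hG0 2 (by decide)) (hV3 Q hQ)
      (by rw [DD_str2' hne]; decide) (by rw [DD_str2' hne]; decide)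
      (mul_ne_zero hb₀ (by norm_num))
    rwa [smulS_str2' hne, show pmul 2 1 = 3 from by decide,
      show pmul 0 2 = 2 from by decide] at hk
  have h21 : ∀ Q, Good Q → Complex.I • Pstr (str2 κ₁ κ₂ 2 1 Q) ∈ g := by
    intro Q hQ
    have hk := kill2' g (hmem 0 hG0 1 (by decide)) (hV2 Q hQ)
      (by rw [DD_str2' hne]; decide) (by rw [DD_str2' hne]; decide)
      (mul_ne_zero ha₀ (by norm_num))
    rwa [smulS_str2' hne, show pmul 1 3 = 2 from by decide,
      show pmul 0 1 = 1 from by decide] at hk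
  have h23 : ∀ Q, Good Q → Complex.I • Pstr (str2 κ₁ κ₂ 2 3 Q) ∈ g := by
    intro Q hQ
    have hk := kill2 g (hmem 0 hG0 3 (by decide)) (hV2 Q hQ)
      (by rw [DD_str2' hne]; decide) (by rw [DD_str2' hne]; decide)
      (mul_ne_zero hc₀ (by norm_num))
    rwa [smulS_str2' hne, show pmul 3 1 = 2 from by decide,
      show pmul 0 3 = 3 from by decide] at hk
  have h12 : ∀ Q, Good Q → Complex.I • Pstr (str2 κ₁ κ₂ 1 2 Q) ∈ g := by
    intro Q hQ
    have hk := kill2' g (hmem 0 hG0 2 (by decide)) (hV1 Q hQ)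
      (by rw [DD_str2' hne]; decide) (by rw [DD_str2' hne]; decide)
      (mul_ne_zero hb₀ (by norm_num))
    rwa [smulS_str2' hne, show pmul 2 3 = 1 from by decide,
      show pmul 0 2 = 2 from by decide] at hk
  have h13 : ∀ Q, Good Q → Complex.I • Pstr (str2 κ₁ κ₂ 1 3 Q) ∈ g := by
    intro Q hQ
    have hk := kill2 g (hmem 0 hG0 3 (by decide)) (hV1 Q hQ)
      (by rw [DD_str2' hne]; decide) (by rw [DD_str2' hne]; decide)
      (mul_ne_zero hc₀ (by norm_num))
    rwa [smulS_str2' hne, show pmul 3 2 = 1 from by decide,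
      show pmul 0 3 = 3 from by decide] at hk
  -- diagonal families
  have h33 : ∀ Q, Good Q → Complex.I • Pstr (str2 κ₁ κ₂ 3 3 Q) ∈ g := by
    intro Q hQ
    have hk := InG_mul g (h23 Q hQ) (hmem 0 hG0 1 (by decide))
      (by rw [DD_str2 hne]; decide)
    rwa [smulS_str2 hne, show pmul 2 1 = 3 from by decide,
      show pmul 3 0 = 3 from by decide] at hk
  have h11 : ∀ Q, Good Q → Complex.I • Pstr (str2 κ₁ κ₂ 1 1 Q) ∈ g := by
    intro Q hQ
    have hk := InG_mul g (h31 Q hQ) (hmem 0 hG0 2 (by decide))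
      (by rw [DD_str2 hne]; decide)
    rwa [smulS_str2 hne, show pmul 3 2 = 1 from by decide,
      show pmul 1 0 = 1 from by decide] at hk
  have h22 : ∀ Q, Good Q → Complex.I • Pstr (str2 κ₁ κ₂ 2 2 Q) ∈ g := by
    intro Q hQ
    have hk := InG_mul g (h12 Q hQ) (hmem 0 hG0 3 (by decide))
      (by rw [DD_str2 hne]; decide)
    rwa [smulS_str2 hne, show pmul 1 3 = 2 from by decide,
      show pmul 2 0 = 2 from by decide] at hk
  -- identity at κ₁
  have h01 : ∀ Q, Good Q → Complex.I • Pstr (str2 κ₁ κ₂ 0 1 Q) ∈ g := by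
    intro Q hQ
    have hk := InG_mul g (h12 Q hQ) (h13 0 hG0) (by rw [DD_str2 hne]; decide)
    rwa [smulS_str2 hne, show pmul 1 1 = 0 from by decide,
      show pmul 2 3 = 1 from by decide] at hk
  have h02 : ∀ Q, Good Q → Complex.I • Pstr (str2 κ₁ κ₂ 0 2 Q) ∈ g := by
    intro Q hQ
    have hk := InG_mul g (h13 Q hQ) (h11 0 hG0) (by rw [DD_str2 hne]; decide)
    rwa [smulS_str2 hne, show pmul 1 1 = 0 from by decide,
      show pmul 3 1 = 2 from by decide] at hk
  have h03 : ∀ Q, Good Q → Complex.I • Pstr (str2 κ₁ κ₂ 0 3 Q) ∈ g := by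
    intro Q hQ
    have hk := InG_mul g (h11 Q hQ) (h12 0 hG0) (by rw [DD_str2 hne]; decide)
    rwa [smulS_str2 hne, show pmul 1 1 = 0 from by decide,
      show pmul 1 2 = 3 from by decide] at hk
  intro P hP A B hB
  fin_cases A <;> fin_cases B <;>
    first
      | exact absurd rfl hB
      | exact h01 P hP
      | exact h02 P hP
      | exact h03 P hP
      | exact h11 P hP
      | exact h12 P hP
      | exact h13 P hP
      | exact h21 P hP
      | exact h22 P hP
      | exact h23 P hP
      | exact h31 P hP
      | exact h32 P hP
      | exact h33 P hP

end XYZ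
namespace XYZ

variable {N : ℕ}

def bnd (j : Fin (N - 1)) (t : Fin 4) : Fin N → Fin 4 :=
  fun m => if m = siteL j then t else if m = siteR j then t else 0

lemma lie_sum' {α : Type*} (s : Finset α) (x : Matrix (Fin N → Fin 2) (Fin N → Fin 2) ℂ)
    (f : α → Matrix (Fin N → Fin 2) (Fin N → Fin 2) ℂ) :
    ⁅x, ∑ j ∈ s, f j⁆ = ∑ j ∈ s, ⁅x, f j⁆ := by
  simp only [Ring.lie_def, Finset.mul_sum, Finset.sum_mul, ← Finset.sum_sub_distrib]

lemma twoOp_eq (j : Fin (N - 1)) (t : Fin 4) :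
    twoOp (siteL j) (siteR j) (σp t) (σp t) = Pstr (bnd j t) := by
  have hfun : (fun m => if m = siteL j then σp t else if m = siteR j then σp t else 1)
      = fun m => σp (bnd j t m) := by
    funext m
    by_cases h1 : m = siteL j
    · rw [bnd, if_pos h1, if_pos h1]
    · by_cases h2 : m = siteR j
      · rw [bnd, if_neg h1, if_pos h2, if_neg h1, if_pos h2]
      · rw [bnd, if_neg h1, if_neg h2, if_neg h1, if_neg h2]; rfl
  rw [twoOp, hfun, Pstr]

lemma localOp_eq (κ κ' : Fin N) (t : Fin 4) :
    localOp κ (σp t) = Pstr (str2 κ κ' t 0 0) := by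
  have hfun : (fun m => if m = κ then σp t else 1)
      = fun m => σp (str2 κ κ' t 0 0 m) := by
    funext m
    by_cases h1 : m = κ
    · rw [str2, if_pos h1, if_pos h1]
    · rw [str2, if_neg h1, if_neg h1]
      by_cases h2 : m = κ'
      · rw [if_pos h2]; rfl
      · rw [if_neg h2]; rfl
  rw [localOp, hfun, Pstr]

lemma xyz_smul (N : ℕ) (a b c : Fin (N - 1) → ℝ) :
    Complex.I • xyzChain N a b c
      = ∑ j, (a j • (Complex.I • Pstr (bnd j 1)) + b j • (Complex.I • Pstr (bnd j 2))
          + c j • (Complex.I • Pstr (bnd j 3))) := by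
  rw [xyzChain, Finset.smul_sum]
  refine Finset.sum_congr rfl fun j _ => ?_
  rw [show PauliX = σp 1 from rfl, show PauliY = σp 2 from rfl,
    show PauliZ = σp 3 from rfl, twoOp_eq, twoOp_eq, twoOp_eq, smul_add, smul_add,
    smul_comm Complex.I ((a j : ℂ)), smul_comm Complex.I ((b j : ℂ)),
    smul_comm Complex.I ((c j : ℂ)), Complex.coe_smul, Complex.coe_smul,
    Complex.coe_smul]

set_option maxHeartbeats 2000000 in
lemma main_gen (N : ℕ) (hN : 2 ≤ N) (a b c : Fin (N - 1) → ℝ)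
    (ha : ∀ j, a j ≠ 0) (hb : ∀ j, b j ≠ 0) (hc : ∀ j, c j ≠ 0)
    (g : LieSubalgebra ℝ (Matrix (Fin N → Fin 2) (Fin N → Fin 2) ℂ))
    (hg0 : Complex.I • xyzChain N a b c ∈ g)
    (hgZ : Complex.I • localOp (⟨0, Nat.lt_of_lt_of_le two_pos hN⟩ : Fin N) PauliZ ∈ g)
    (hgX : Complex.I • localOp (⟨0, Nat.lt_of_lt_of_le two_pos hN⟩ : Fin N) PauliX ∈ g) :
    ∀ s : Fin N → Fin 4, s ≠ 0 → Complex.I • Pstr s ∈ g := by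
  have claim : ∀ k : ℕ, ∀ s : Fin N → Fin 4, s ≠ 0 →
      (∀ m : Fin N, k + 1 ≤ m.val → s m = 0) → Complex.I • Pstr s ∈ g := by
    intro k
    induction k with
    | zero =>
      intro s hs hsupp
      have h01 : (0 : ℕ) < N := by omega
      have h11 : (1 : ℕ) < N := by omega
      set κ₁ : Fin N := ⟨0, h01⟩ with hκ₁
      set κ₂ : Fin N := ⟨1, h11⟩ with hκ₂
      have hne : κ₁ ≠ κ₂ := by simp [hκ₁, hκ₂, Fin.ext_iff]
      have hZ : Complex.I • Pstr (str2 κ₁ κ₂ 3 0 0) ∈ g := by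
        rw [← localOp_eq κ₁ κ₂ 3]
        exact hgZ
      have hX : Complex.I • Pstr (str2 κ₁ κ₂ 1 0 0) ∈ g := by
        rw [← localOp_eq κ₁ κ₂ 1]
        exact hgX
      have hY : Complex.I • Pstr (str2 κ₁ κ₂ 2 0 0) ∈ g := by
        have hk := InG_mul g hZ hX (by rw [DD_str2 hne]; decide)
        rwa [smulS_str2 hne, show pmul 3 1 = 2 from by decide,
          show pmul 0 0 = 0 from by decide] at hk
      obtain ⟨v, hv0, rfl⟩ : ∃ v : Fin 4, v ≠ 0 ∧ s = str2 κ₁ κ₂ v 0 0 := by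
        refine ⟨s κ₁, ?_, ?_⟩
        · intro h
          apply hs
          funext m
          by_cases hm : m = κ₁
          · rw [hm]; exact h
          · have : 1 ≤ m.val := by
              rcases Nat.eq_zero_or_pos m.val with h0 | h1
              · exact absurd (Fin.ext h0) hm
              · exact h1
            exact hsupp m this
        · funext m
          by_cases hm : m = κ₁
          · rw [hm, str2_fst]
          · have hv : 1 ≤ m.val := by
              rcases Nat.eq_zero_or_pos m.val with h0 | h1
              · exact absurd (Fin.ext h0) hm
              · exact h1
            rw [hsupp m hv, str2, if_neg hm]
            by_cases h2 : m = κ₂ <;> simp [h2]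
      fin_cases v
      · exact absurd rfl hv0
      · exact hX
      · exact hY
      · exact hZ
    | succ k IH =>
      intro s hs hsupp
      by_cases hkN : k + 1 < N
      · -- real step
        have hk1 : k < N := by omega
        have hk2 : k + 1 < N := hkN
        have hk3 : k < N - 1 := by omega
        set κ₁ : Fin N := ⟨k, hk1⟩ with hκ₁
        set κ₂ : Fin N := ⟨k + 1, hk2⟩ with hκ₂
        set j₀ : Fin (N - 1) := ⟨k, hk3⟩ with hj₀
        have hne : κ₁ ≠ κ₂ := by simp [hκ₁, hκ₂, Fin.ext_iff]
        have hbndeq : ∀ t : Fin 4, bnd j₀ t = str2 κ₁ κ₂ t t 0 := fun t => rfl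
        have hsupp_str : ∀ P : Fin N → Fin 4, (∀ m : Fin N, k ≤ m.val → P m = 0) →
            ∀ A : Fin 4, ∀ m : Fin N, k + 1 ≤ m.val → str2 κ₁ κ₂ A 0 P m = 0 := by
          intro P hPP A m hm
          have h1 : m ≠ κ₁ := by
            intro h; rw [h] at hm; simp [hκ₁] at hm
          rw [str2, if_neg h1]
          by_cases h2 : m = κ₂
          · rw [if_pos h2]
          · rw [if_neg h2]
            exact hPP m (by omega)
        have hmem : ∀ P : Fin N → Fin 4, (∀ m : Fin N, k ≤ m.val → P m = 0) →
            ∀ A : Fin 4, A ≠ 0 → Complex.I • Pstr (str2 κ₁ κ₂ A 0 P) ∈ g :=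
          fun P hPP A hA => IH _ (str2_ne_zero_fst hA _ _) (hsupp_str P hPP A)
        have hT : ∀ P : Fin N → Fin 4, (∀ m : Fin N, k ≤ m.val → P m = 0) →
            ∀ A : Fin 4, A ≠ 0 →
            a j₀ • ⁅Complex.I • Pstr (str2 κ₁ κ₂ A 0 P),
                Complex.I • Pstr (str2 κ₁ κ₂ 1 1 0)⁆
            + b j₀ • ⁅Complex.I • Pstr (str2 κ₁ κ₂ A 0 P),
                Complex.I • Pstr (str2 κ₁ κ₂ 2 2 0)⁆
            + c j₀ • ⁅Complex.I • Pstr (str2 κ₁ κ₂ A 0 P),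
                Complex.I • Pstr (str2 κ₁ κ₂ 3 3 0)⁆ ∈ g := by
          intro P hPP A hA
          have hs0 : Complex.I • Pstr (str2 κ₁ κ₂ A 0 P) ∈ g := hmem P hPP A hA
          have htot := g.lie_mem hs0 hg0
          rw [xyz_smul, lie_sum'] at htot
          rw [Finset.sum_congr rfl (fun j _ => by
            rw [lie_add, lie_add, lie_smul (a j), lie_smul (b j), lie_smul (c j)])]
            at htot
          have hBr : ∀ j : Fin (N - 1), j ≠ j₀ → ∀ t : Fin 4,
              ⁅Complex.I • Pstr (str2 κ₁ κ₂ A 0 P), Complex.I • Pstr (bnd j t)⁆ ∈ g := by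
            intro j hj t
            rw [Br_eq]
            by_cases he : Even (DD (str2 κ₁ κ₂ A 0 P) (bnd j t))
            · rw [Rcoef_even he, zero_smul]
              exact Submodule.zero_mem g.toSubmodule
            · have hjk : j.val < k := by
                have hjne : j.val ≠ k := fun h => hj (Fin.ext h)
                rcases Nat.lt_or_ge j.val k with h | h
                · exact h
                · exfalso
                  apply he
                  have : DD (str2 κ₁ κ₂ A 0 P) (bnd j t) = 0 := by
                    refine Finset.sum_eq_zero fun m _ => ?_
                    by_cases hm : k + 1 ≤ m.val
                    · rw [hsupp_str P hPP A m hm, pexp_zero_left]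
                    · have hm1 : m ≠ siteL j := by
                        intro hh; rw [hh] at hm; simp [siteL] at hm; omega
                      have hm2 : m ≠ siteR j := by
                        intro hh; rw [hh] at hm; simp [siteR] at hm; omega
                      rw [bnd, if_neg hm1, if_neg hm2, pexp_zero_right]
                  rw [this]
                  exact Even.zero
              refine Submodule.smul_mem g.toSubmodule _ (IH _ ?_ ?_)
              · intro h0
                apply he
                rw [← smulS_eq_zero h0, DD_self]
                exact Even.zero
              · intro m hm
                have hs0m : str2 κ₁ κ₂ A 0 P m = 0 := hsupp_str P hPP A m hm
                have hm1 : m ≠ siteL j := by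
                  intro hh; rw [hh] at hm; simp [siteL] at hm; omega
                have hm2 : m ≠ siteR j := by
                  intro hh; rw [hh] at hm; simp [siteR] at hm; omega
                show pmul (str2 κ₁ κ₂ A 0 P m) (bnd j t m) = 0
                rw [hs0m, bnd, if_neg hm1, if_neg hm2]
                rfl
          have hterm : ∀ j ∈ Finset.univ.erase j₀,
              (a j • ⁅Complex.I • Pstr (str2 κ₁ κ₂ A 0 P), Complex.I • Pstr (bnd j 1)⁆
              + b j • ⁅Complex.I • Pstr (str2 κ₁ κ₂ A 0 P), Complex.I • Pstr (bnd j 2)⁆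
              + c j • ⁅Complex.I • Pstr (str2 κ₁ κ₂ A 0 P), Complex.I • Pstr (bnd j 3)⁆)
                ∈ g := by
            intro j hj
            have hjne := Finset.ne_of_mem_erase hj
            exact Submodule.add_mem g.toSubmodule
              (Submodule.add_mem g.toSubmodule
                (Submodule.smul_mem g.toSubmodule _ (hBr j hjne 1))
                (Submodule.smul_mem g.toSubmodule _ (hBr j hjne 2)))
              (Submodule.smul_mem g.toSubmodule _ (hBr j hjne 3))
          have hj0 : (a j₀ • ⁅Complex.I • Pstr (str2 κ₁ κ₂ A 0 P),
                Complex.I • Pstr (bnd j₀ 1)⁆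
              + b j₀ • ⁅Complex.I • Pstr (str2 κ₁ κ₂ A 0 P), Complex.I • Pstr (bnd j₀ 2)⁆
              + c j₀ • ⁅Complex.I • Pstr (str2 κ₁ κ₂ A 0 P), Complex.I • Pstr (bnd j₀ 3)⁆)
                ∈ g := by
            have hsum_erase := Submodule.sum_mem g.toSubmodule hterm
            have heq := Finset.sum_erase_add Finset.univ (fun j =>
              a j • ⁅Complex.I • Pstr (str2 κ₁ κ₂ A 0 P), Complex.I • Pstr (bnd j 1)⁆
              + b j • ⁅Complex.I • Pstr (str2 κ₁ κ₂ A 0 P), Complex.I • Pstr (bnd j 2)⁆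
              + c j • ⁅Complex.I • Pstr (str2 κ₁ κ₂ A 0 P), Complex.I • Pstr (bnd j 3)⁆)
              (Finset.mem_univ j₀)
            have : (a j₀ • ⁅Complex.I • Pstr (str2 κ₁ κ₂ A 0 P),
                Complex.I • Pstr (bnd j₀ 1)⁆
              + b j₀ • ⁅Complex.I • Pstr (str2 κ₁ κ₂ A 0 P), Complex.I • Pstr (bnd j₀ 2)⁆
              + c j₀ • ⁅Complex.I • Pstr (str2 κ₁ κ₂ A 0 P), Complex.I • Pstr (bnd j₀ 3)⁆)
                = (∑ j, (a j • ⁅Complex.I • Pstr (str2 κ₁ κ₂ A 0 P),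
                    Complex.I • Pstr (bnd j 1)⁆
                  + b j • ⁅Complex.I • Pstr (str2 κ₁ κ₂ A 0 P), Complex.I • Pstr (bnd j 2)⁆
                  + c j • ⁅Complex.I • Pstr (str2 κ₁ κ₂ A 0 P),
                    Complex.I • Pstr (bnd j 3)⁆))
                  - ∑ j ∈ Finset.univ.erase j₀,
                    (a j • ⁅Complex.I • Pstr (str2 κ₁ κ₂ A 0 P),
                      Complex.I • Pstr (bnd j 1)⁆
                    + b j • ⁅Complex.I • Pstr (str2 κ₁ κ₂ A 0 P),
                      Complex.I • Pstr (bnd j 2)⁆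
                    + c j • ⁅Complex.I • Pstr (str2 κ₁ κ₂ A 0 P),
                      Complex.I • Pstr (bnd j 3)⁆) := by
              rw [eq_sub_iff_add_eq, add_comm, heq]
            rw [this]
            exact Submodule.sub_mem g.toSubmodule htot hsum_erase
          rwa [hbndeq 1, hbndeq 2, hbndeq 3] at hj0
        have hstep := step_core g κ₁ κ₂ hne (a j₀) (b j₀) (c j₀)
          (ha j₀) (hb j₀) (hc j₀) (fun P => ∀ m : Fin N, k ≤ m.val → P m = 0)
          (fun m _ => rfl) hmem hT
        -- decompose s
        have hPG : ∀ m : Fin N, k ≤ m.val →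
            (if m = κ₁ then 0 else if m = κ₂ then 0 else s m) = 0 := by
          intro m hm
          by_cases h1 : m = κ₁
          · rw [if_pos h1]
          · rw [if_neg h1]
            by_cases h2 : m = κ₂
            · rw [if_pos h2]
            · rw [if_neg h2]
              have hv1 : m.val ≠ k := fun h => h1 (Fin.ext h)
              have hv2 : m.val ≠ k + 1 := fun h => h2 (Fin.ext h)
              exact hsupp m (by omega)
        have hs_eq : s = str2 κ₁ κ₂ (s κ₁) (s κ₂)
            (fun m => if m = κ₁ then 0 else if m = κ₂ then 0 else s m) := by
          funext m
          by_cases h1 : m = κ₁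
          · rw [h1, str2_fst]
          · by_cases h2 : m = κ₂
            · rw [h2, str2_snd hne]
            · rw [str2]
              simp only [if_neg h1, if_neg h2]
        by_cases hB : s κ₂ = 0
        · by_cases hA : s κ₁ = 0
          · refine IH s hs fun m hm => ?_
            by_cases h1 : m = κ₁
            · rw [h1] at hm; simp [hκ₁] at hm
            · by_cases h2 : m = κ₂
              · rw [h2]; exact hB
              · have hv1 : m.val ≠ k + 1 := fun h => h2 (Fin.ext h)
                exact hsupp m (by omega)
          · rw [hs_eq, hB]
            exact hmem _ hPG _ hA
        · rw [hs_eq]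
          exact hstep _ hPG _ _ hB
      · -- k+1 ≥ N : trivial from IH
        refine IH s hs fun m hm => ?_
        exact absurd hm (by have := m.isLt; omega)
  intro s hs
  refine claim (N - 1) s hs fun m hm => ?_
  exact absurd hm (by have := m.isLt; omega)

end XYZ
namespace XYZ

lemma bnd_ne_zero {N : ℕ} (j : Fin (N - 1)) {t : Fin 4} (ht : t ≠ 0) : bnd j t ≠ 0 := by
  intro h
  apply ht
  have := congrFun h (siteL j)
  rwa [bnd, if_pos rfl, Pi.zero_apply] at this

lemma xyz_Pstr (N : ℕ) (a b c : Fin (N - 1) → ℝ) :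
    xyzChain N a b c = ∑ j, ((a j : ℂ) • Pstr (bnd j 1) + (b j : ℂ) • Pstr (bnd j 2)
      + (c j : ℂ) • Pstr (bnd j 3)) := by
  rw [xyzChain]
  refine Finset.sum_congr rfl fun j _ => ?_
  rw [show PauliX = σp 1 from rfl, show PauliY = σp 2 from rfl,
    show PauliZ = σp 3 from rfl, twoOp_eq, twoOp_eq, twoOp_eq]

lemma xyz_herm (N : ℕ) (a b c : Fin (N - 1) → ℝ) :
    (xyzChain N a b c)ᴴ = xyzChain N a b c := by
  rw [xyz_Pstr, Matrix.conjTranspose_sum]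
  refine Finset.sum_congr rfl fun j _ => ?_
  simp only [Matrix.conjTranspose_add, Matrix.conjTranspose_smul, Pstr_herm,
    Complex.star_def, Complex.conj_ofReal]

lemma xyz_trace (N : ℕ) (a b c : Fin (N - 1) → ℝ) :
    (xyzChain N a b c).trace = 0 := by
  rw [xyz_Pstr, Matrix.trace_sum]
  refine Finset.sum_eq_zero fun j _ => ?_
  rw [Matrix.trace_add, Matrix.trace_add, Matrix.trace_smul, Matrix.trace_smul,
    Matrix.trace_smul, Pstr_trace _ (bnd_ne_zero j (by decide)),
    Pstr_trace _ (bnd_ne_zero j (by decide)), Pstr_trace _ (bnd_ne_zero j (by decide))]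
  simp

end XYZ

theorem xyz_two_end_controls_full' (N : ℕ) (hN : 2 ≤ N) (a b c : Fin (N - 1) → ℝ)
    (ha : ∀ j, a j ≠ 0) (hb : ∀ j, b j ≠ 0) (hc : ∀ j, c j ≠ 0) :
    let H₀ := xyzChain N a b c
    let H₁ : Matrix (Fin N → Fin 2) (Fin N → Fin 2) ℂ := localOp ⟨0, Nat.lt_of_lt_of_le two_pos hN⟩ PauliZ
    let H₂ : Matrix (Fin N → Fin 2) (Fin N → Fin 2) ℂ := localOp ⟨0, Nat.lt_of_lt_of_le two_pos hN⟩ PauliX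
    ((LieSubalgebra.lieSpan ℝ (Matrix (Fin N → Fin 2) (Fin N → Fin 2) ℂ)
        {Complex.I • H₀, Complex.I • H₁, Complex.I • H₂}) :
      Set (Matrix (Fin N → Fin 2) (Fin N → Fin 2) ℂ)) =
      {M | Mᴴ = -M ∧ M.trace = 0} := by
  intro H₀ H₁ H₂
  have h1N : (1 : ℕ) < N := by omega
  have hH1 : H₁ = XYZ.Pstr (XYZ.str2 (⟨0, Nat.lt_of_lt_of_le two_pos hN⟩ : Fin N) ⟨1, h1N⟩ 3 0 0) :=
    XYZ.localOp_eq _ _ 3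
  have hH2 : H₂ = XYZ.Pstr (XYZ.str2 (⟨0, Nat.lt_of_lt_of_le two_pos hN⟩ : Fin N) ⟨1, h1N⟩ 1 0 0) :=
    XYZ.localOp_eq _ _ 1
  apply Set.Subset.antisymm
  · -- forward inclusion into su
    have hle : LieSubalgebra.lieSpan ℝ (Matrix (Fin N → Fin 2) (Fin N → Fin 2) ℂ)
        {Complex.I • H₀, Complex.I • H₁, Complex.I • H₂} ≤ XYZ.suN N := by
      rw [LieSubalgebra.lieSpan_le]
      intro x hx
      have hmem : ∀ (H : Matrix (Fin N → Fin 2) (Fin N → Fin 2) ℂ),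
          Hᴴ = H → H.trace = 0 → Complex.I • H ∈ XYZ.suN N := by
        intro H hh ht
        refine ⟨?_, ?_⟩
        · rw [Matrix.conjTranspose_smul, Complex.star_def, Complex.conj_I, hh, neg_smul]
        · rw [Matrix.trace_smul, ht, smul_zero]
      rcases hx with hx | hx | hx
      · rw [hx]
        exact hmem _ (XYZ.xyz_herm N a b c) (XYZ.xyz_trace N a b c)
      · rw [hx]
        refine hmem _ ?_ ?_
        · rw [hH1]; exact XYZ.Pstr_herm _
        · rw [hH1]; exact XYZ.Pstr_trace _ (XYZ.str2_ne_zero_fst (by decide) _ _)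
      · rw [Set.mem_singleton_iff.mp hx]
        refine hmem _ ?_ ?_
        · rw [hH2]; exact XYZ.Pstr_herm _
        · rw [hH2]; exact XYZ.Pstr_trace _ (XYZ.str2_ne_zero_fst (by decide) _ _)
    intro M hM
    exact hle hM
  · intro M hM
    have hg := XYZ.main_gen N hN a b c ha hb hc
      (LieSubalgebra.lieSpan ℝ (Matrix (Fin N → Fin 2) (Fin N → Fin 2) ℂ)
        {Complex.I • H₀, Complex.I • H₁, Complex.I • H₂})
      (LieSubalgebra.subset_lieSpan (Set.mem_insert _ _))
      (LieSubalgebra.subset_lieSpan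
        (Set.mem_insert_iff.mpr (Or.inr (Set.mem_insert _ _))))
      (LieSubalgebra.subset_lieSpan
        (Set.mem_insert_iff.mpr (Or.inr (Set.mem_insert_iff.mpr (Or.inr rfl)))))
    exact XYZ.mem_of_su hg M hM.1 hM.2

/-- An XYZ chain (including the XXZ case) with two end-spin controls `Z_1` and `X_1` is fully
controllable: the dynamical Lie algebra is `su(2^N)`, the traceless skew-Hermitian matrices. -/
theorem xyz_two_end_controls_full (N : ℕ) (hN : 2 ≤ N) (a b c : Fin (N - 1) → ℝ)
    (ha : ∀ j, a j ≠ 0) (hb : ∀ j, b j ≠ 0) (hc : ∀ j, c j ≠ 0) :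
    let H₀ := xyzChain N a b c
    let H₁ : Matrix (Fin N → Fin 2) (Fin N → Fin 2) ℂ := localOp ⟨0, by omega⟩ PauliZ
    let H₂ : Matrix (Fin N → Fin 2) (Fin N → Fin 2) ℂ := localOp ⟨0, by omega⟩ PauliX
    ((LieSubalgebra.lieSpan ℝ (Matrix (Fin N → Fin 2) (Fin N → Fin 2) ℂ)
        {Complex.I • H₀, Complex.I • H₁, Complex.I • H₂}) :
      Set (Matrix (Fin N → Fin 2) (Fin N → Fin 2) ℂ)) =
      {M | Mᴴ = -M ∧ M.trace = 0} :=
  xyz_two_end_controls_full' N hN a b c ha hb hc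
end

section
/- Let N and p be positive integers with 2p ≤ N. In the polynomial ring over ℝ in 2N variables x_1, …, x_N, y_1, …, y_N (MvPolynomial (Fin N ⊕ Fin N) ℝ), for indices j ≠ k define q(j,k,true) = x_j x_k + y_j y_k and q(j,k,false) = x_j y_k − y_j x_k. Let E be the set of all products ∏_{i=1}^{p} q(m(2i−1), m(2i), ε(i)) over all injective functions m : Fin (2p) → Fin N and all sign choices ε : Fin p → Bool. Then the real dimension of the linear span of E equals (N choose p) · ((N − p) choose p). -/
open MvPolynomial

/-- The variable `x_j` in the polynomial ring in `2N` variables. -/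
noncomputable def xVar {N : ℕ} (j : Fin N) : MvPolynomial (Fin N ⊕ Fin N) ℝ :=
  MvPolynomial.X (Sum.inl j)

/-- The variable `y_j` in the polynomial ring in `2N` variables. -/
noncomputable def yVar {N : ℕ} (j : Fin N) : MvPolynomial (Fin N ⊕ Fin N) ℝ :=
  MvPolynomial.X (Sum.inr j)

/-- The quadratic factor `q(j,k,ε)`: `x_j x_k + y_j y_k` if `ε = true`,
and `x_j y_k − y_j x_k` if `ε = false`. -/
noncomputable def qFactor {N : ℕ} (j k : Fin N) (ε : Bool) : MvPolynomial (Fin N ⊕ Fin N) ℝ :=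
  if ε then xVar j * xVar k + yVar j * yVar k else xVar j * yVar k - yVar j * xVar k

section BaseChange

open Submodule TensorProduct

lemma finrank_span_complexify {V : Type*} [AddCommGroup V] [Module ℝ V] (s : Set V) :
    Module.finrank ℂ (span ℂ ((TensorProduct.mk ℝ ℂ V 1) '' s)) = Module.finrank ℝ (span ℝ s) := by
  rw [← Submodule.baseChange_span]
  set p := span ℝ s
  set L := p.subtype.baseChange ℂ with hL
  have hinj : Function.Injective L := by
    rw [hL]
    have := Module.Flat.lTensor_preserves_injective_linearMap (M := ℂ) p.subtype p.injective_subtype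
    rwa [show (⇑(p.subtype.baseChange ℂ) : ℂ ⊗[ℝ] p → ℂ ⊗[ℝ] V) = ⇑(p.subtype.lTensor ℂ) from
      LinearMap.baseChange_eq_ltensor _]
  have hrange : LinearMap.range L = p.baseChange ℂ := by
    apply le_antisymm
    · rintro - ⟨x, rfl⟩
      induction x using TensorProduct.induction_on with
      | zero => simp
      | tmul c m => simpa [hL, LinearMap.baseChange_tmul] using
          Submodule.tmul_mem_baseChange_of_mem c m.2
      | add x y hx hy => rw [map_add]; exact add_mem hx hy
    · exact le_of_eq (by rw [Submodule.baseChange, hL])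
  rw [← hrange, LinearMap.finrank_range_of_inj hinj, Module.finrank_baseChange]

lemma finrank_span_mv_complexify {σ : Type*} (E : Set (MvPolynomial σ ℝ)) :
    Module.finrank ℝ (span ℝ E) =
      Module.finrank ℂ (span ℂ (MvPolynomial.map (algebraMap ℝ ℂ) '' E)) := by
  rw [← finrank_span_complexify E]
  set e := MvPolynomial.algebraTensorAlgEquiv (R := ℝ) (σ := σ) (A := ℂ)
  have himg : (MvPolynomial.map (algebraMap ℝ ℂ)) '' E
      = ⇑e '' ((TensorProduct.mk ℝ ℂ _ 1) '' E) := by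
    rw [Set.image_image]
    apply Set.image_congr
    intro P _
    simp [e, MvPolynomial.algebraTensorAlgEquiv_tmul]
  rw [himg, show (⇑e : ℂ ⊗[ℝ] MvPolynomial σ ℝ → MvPolynomial σ ℂ) = ⇑e.toLinearMap from rfl,
    ← Submodule.map_span e.toLinearMap]
  exact (e.toLinearEquiv.finrank_map_eq _).symm

end BaseChange

noncomputable def zC {N : ℕ} (j : Fin N) : MvPolynomial (Fin N ⊕ Fin N) ℂ :=
  X (Sum.inl j) + C Complex.I * X (Sum.inr j)
noncomputable def wC {N : ℕ} (j : Fin N) : MvPolynomial (Fin N ⊕ Fin N) ℂ :=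
  X (Sum.inl j) - C Complex.I * X (Sum.inr j)
noncomputable def mapC {N : ℕ} :
    MvPolynomial (Fin N ⊕ Fin N) ℝ →+* MvPolynomial (Fin N ⊕ Fin N) ℂ :=
  MvPolynomial.map (algebraMap ℝ ℂ)

lemma hI {N : ℕ} : (C Complex.I : MvPolynomial (Fin N ⊕ Fin N) ℂ) * C Complex.I = -1 := by
  rw [← C_mul, Complex.I_mul_I, map_neg, map_one]

lemma hHalf {N : ℕ} : (C (1/2 : ℂ) : MvPolynomial (Fin N ⊕ Fin N) ℂ) * 2 = 1 := by
  rw [show (2 : MvPolynomial (Fin N ⊕ Fin N) ℂ) = C (2:ℂ) from (map_ofNat C 2).symm, ← C_mul]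
  norm_num

lemma I3 {N : ℕ} (j k : Fin N) :
    zC j * wC k = mapC (qFactor j k true) - C Complex.I * mapC (qFactor j k false) := by
  simp only [zC, wC, qFactor, reduceIte, Bool.false_eq_true, if_false, if_true, mapC, map_add,
    map_sub, map_mul, MvPolynomial.map_X, xVar, yVar]
  linear_combination (-(X (Sum.inr j) * X (Sum.inr k)) : MvPolynomial (Fin N ⊕ Fin N) ℂ) * hI

lemma I4 {N : ℕ} (j k : Fin N) :
    zC k * wC j = mapC (qFactor j k true) + C Complex.I * mapC (qFactor j k false) := by
  simp only [zC, wC, qFactor, reduceIte, Bool.false_eq_true, if_false, if_true, mapC, map_add,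
    map_sub, map_mul, MvPolynomial.map_X, xVar, yVar]
  linear_combination (-(X (Sum.inr j) * X (Sum.inr k)) : MvPolynomial (Fin N ⊕ Fin N) ℂ) * hI

lemma I1 {N : ℕ} (j k : Fin N) :
    mapC (qFactor j k true) = C (1/2 : ℂ) * (zC j * wC k + zC k * wC j) := by
  have h3 := I3 j k
  have h4 := I4 j k
  linear_combination (-C (1/2 : ℂ)) * h3 + (-C (1/2:ℂ)) * h4 - (mapC (qFactor j k true)) * hHalf

lemma I2 {N : ℕ} (j k : Fin N) :
    mapC (qFactor j k false) = C (Complex.I/2 : ℂ) * (zC j * wC k - zC k * wC j) := by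
  have h3 := I3 j k
  have h4 := I4 j k
  have h2 : (C (Complex.I/2 : ℂ) : MvPolynomial (Fin N ⊕ Fin N) ℂ) * C Complex.I * 2 = -1 := by
    rw [show (2 : MvPolynomial (Fin N ⊕ Fin N) ℂ) = C (2:ℂ) from (map_ofNat C 2).symm,
      ← C_mul, ← C_mul]
    have : Complex.I / 2 * Complex.I * 2 = -1 := by ring_nf; simp [Complex.I_sq]
    rw [this, map_neg, map_one]
  linear_combination (-C (Complex.I/2 : ℂ)) * h3 + C (Complex.I/2:ℂ) * h4
    + (mapC (qFactor j k false)) * h2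

variable {N p : ℕ}

/-- pairs of disjoint `p`-subsets -/
noncomputable def pairSet (N p : ℕ) : Finset (Finset (Fin N) × Finset (Fin N)) :=
  (Finset.univ.powersetCard p).biUnion fun A => (Aᶜ.powersetCard p).image fun B => (A, B)

lemma subset_compl_iff_disjoint' (A B : Finset (Fin N)) : B ⊆ Aᶜ ↔ Disjoint A B := by
  constructor
  · intro h
    exact Finset.disjoint_left.mpr fun x hxA hxB => Finset.mem_compl.mp (h hxB) hxA
  · intro h x hx
    exact Finset.mem_compl.mpr fun hA => Finset.disjoint_right.mp h hx hA

lemma mem_pairSet {t : Finset (Fin N) × Finset (Fin N)} :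
    t ∈ pairSet N p ↔ t.1.card = p ∧ t.2.card = p ∧ Disjoint t.1 t.2 := by
  obtain ⟨A, B⟩ := t
  simp only [pairSet, Finset.mem_biUnion, Finset.mem_image, Finset.mem_powersetCard]
  constructor
  · rintro ⟨A', ⟨-, hA'⟩, B', ⟨hB'sub, hB'⟩, h⟩
    obtain ⟨rfl, rfl⟩ := Prod.mk.injEq .. ▸ h
    obtain ⟨h1, h2⟩ := Prod.mk.inj h
    exact ⟨hA', hB', (subset_compl_iff_disjoint' _ _).mp hB'sub⟩
  · rintro ⟨hA, hB, hd⟩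
    exact ⟨A, ⟨Finset.subset_univ _, hA⟩, B,
      ⟨(subset_compl_iff_disjoint' _ _).mpr hd, hB⟩, rfl⟩

lemma card_pairSet : (pairSet N p).card = N.choose p * (N - p).choose p := by
  have hdisj : ∀ A ∈ (Finset.univ : Finset (Fin N)).powersetCard p, ∀ A2 ∈ (Finset.univ : Finset (Fin N)).powersetCard p, A ≠ A2 →
      Disjoint ((Aᶜ.powersetCard p).image fun B => (A, B))
        ((A2ᶜ.powersetCard p).image fun B => (A2, B)) := by
    intro A _ A2 _ hAA'
    simp only [Finset.disjoint_left, Finset.mem_image]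
    rintro t ⟨B, -, rfl⟩ ⟨B', -, h⟩
    exact hAA' (Prod.mk.inj h).1.symm
  rw [pairSet, Finset.card_biUnion hdisj]
  · have : ∀ A ∈ (Finset.univ : Finset (Fin N)).powersetCard p,
        ((Aᶜ.powersetCard p).image fun B => (A, B)).card = (N - p).choose p := by
      intro A hA
      rw [Finset.card_image_of_injective _ (fun B B' h => (Prod.mk.inj h).2),
        Finset.card_powersetCard, Finset.card_compl]
      simp only [Finset.mem_powersetCard] at hA
      rw [hA.2, Fintype.card_fin]
    rw [Finset.sum_congr rfl this, Finset.sum_const, Finset.card_powersetCard,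
      Finset.card_univ, Fintype.card_fin, smul_eq_mul]

/-- the exponent of the monomial attached to a pair -/
noncomputable def expnt (t : Finset (Fin N) × Finset (Fin N)) : (Fin N ⊕ Fin N) →₀ ℕ :=
  (∑ a ∈ t.1, Finsupp.single (Sum.inl a) 1) + ∑ b ∈ t.2, Finsupp.single (Sum.inr b) 1

lemma expnt_apply_inl (t : Finset (Fin N) × Finset (Fin N)) (a : Fin N) :
    expnt t (Sum.inl a) = if a ∈ t.1 then 1 else 0 := by
  simp only [expnt, Finsupp.add_apply, Finsupp.finset_sum_apply, Finsupp.single_apply,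
    Sum.inl.injEq, reduceCtorEq, if_false]
  rw [Finset.sum_ite_eq' t.1 a fun _ => 1, Finset.sum_const_zero, add_zero]

lemma expnt_apply_inr (t : Finset (Fin N) × Finset (Fin N)) (b : Fin N) :
    expnt t (Sum.inr b) = if b ∈ t.2 then 1 else 0 := by
  simp only [expnt, Finsupp.add_apply, Finsupp.finset_sum_apply, Finsupp.single_apply,
    Sum.inr.injEq, reduceCtorEq, if_false]
  rw [Finset.sum_ite_eq' t.2 b fun _ => 1, Finset.sum_const_zero, zero_add]

lemma expnt_injective : Function.Injective (expnt (N := N)) := by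
  intro t t' h
  have h1 : t.1 = t'.1 := by
    ext a
    have := congrFun (congrArg (↑·) h) (Sum.inl a)
    simp only [expnt_apply_inl] at this
    by_cases ha : a ∈ t.1 <;> by_cases ha' : a ∈ t'.1 <;> simp_all
  have h2 : t.2 = t'.2 := by
    ext b
    have := congrFun (congrArg (↑·) h) (Sum.inr b)
    simp only [expnt_apply_inr] at this
    by_cases hb : b ∈ t.2 <;> by_cases hb' : b ∈ t'.2 <;> simp_all
  exact Prod.ext h1 h2

/-- the monomial attached to a pair -/
noncomputable def monoPair (t : Finset (Fin N) × Finset (Fin N)) :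
    MvPolynomial (Fin N ⊕ Fin N) ℂ :=
  (∏ a ∈ t.1, X (Sum.inl a)) * ∏ b ∈ t.2, X (Sum.inr b)

lemma monoPair_eq (t : Finset (Fin N) × Finset (Fin N)) :
    monoPair t = monomial (expnt t) 1 := by
  rw [monoPair, expnt, show (1:ℂ) = 1*1 from (one_mul 1).symm, ← monomial_mul,
    monomial_sum_one, monomial_sum_one]
  simp only [MvPolynomial.X]

lemma monoPair_linearIndependent :
    LinearIndependent ℂ fun t : {x // x ∈ pairSet N p} => monoPair t.1 := by
  have := (MvPolynomial.basisMonomials (Fin N ⊕ Fin N) ℂ).linearIndependent.comp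
    (fun t : {x // x ∈ pairSet N p} => expnt t.1)
    (fun t t' h => Subtype.ext (expnt_injective h))
  convert this using 2 with t
  rw [Function.comp_apply, coe_basisMonomials, monoPair_eq]
  all_goals rfl

/-- the substitution `x_j ↦ (Z_j+W_j)/2`, `y_j ↦ -(i/2)(Z_j-W_j)` -/
noncomputable def Phi {N : ℕ} :
    MvPolynomial (Fin N ⊕ Fin N) ℂ →ₐ[ℂ] MvPolynomial (Fin N ⊕ Fin N) ℂ :=
  aeval (Sum.elim (fun j => C (1/2 : ℂ) * (X (Sum.inl j) + X (Sum.inr j)))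
                  (fun j => C (-(Complex.I)/2) * (X (Sum.inl j) - X (Sum.inr j))))

lemma hC' {N : ℕ} : (C Complex.I : MvPolynomial (Fin N ⊕ Fin N) ℂ) * C (-(Complex.I)/2)
    = C (1/2 : ℂ) := by
  rw [← C_mul]
  congr 1
  rw [div_eq_mul_inv, neg_mul, mul_neg, ← mul_assoc, Complex.I_mul_I]
  norm_num

lemma Phi_z {N : ℕ} (j : Fin N) : Phi (zC j) = X (Sum.inl j) := by
  simp only [Phi, zC, map_add, map_mul, aeval_X, aeval_C, Sum.elim_inl, Sum.elim_inr,
    algebraMap_eq]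
  linear_combination ((X (Sum.inl j) - X (Sum.inr j)) : MvPolynomial (Fin N ⊕ Fin N) ℂ) * hC'
    + (X (Sum.inl j) : MvPolynomial (Fin N ⊕ Fin N) ℂ) * hHalf

lemma Phi_w {N : ℕ} (j : Fin N) : Phi (wC j) = X (Sum.inr j) := by
  simp only [Phi, wC, map_sub, map_mul, aeval_X, aeval_C, Sum.elim_inl, Sum.elim_inr,
    algebraMap_eq]
  linear_combination (-(X (Sum.inl j) - X (Sum.inr j)) : MvPolynomial (Fin N ⊕ Fin N) ℂ) * hC'
    + (X (Sum.inr j) : MvPolynomial (Fin N ⊕ Fin N) ℂ) * hHalf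

/-- the `z/w`-monomial attached to a pair of subsets -/
noncomputable def zwPair {N : ℕ} (t : Finset (Fin N) × Finset (Fin N)) :
    MvPolynomial (Fin N ⊕ Fin N) ℂ :=
  (∏ a ∈ t.1, zC a) * ∏ b ∈ t.2, wC b

lemma zwPair_linearIndependent {N p : ℕ} :
    LinearIndependent ℂ fun t : {x // x ∈ pairSet N p} => zwPair t.1 := by
  apply LinearIndependent.of_comp (Phi (N := N)).toLinearMap
  have : (⇑(Phi (N := N)).toLinearMap ∘ fun t : {x // x ∈ pairSet N p} => zwPair t.1)
      = fun t : {x // x ∈ pairSet N p} => monoPair t.1 := by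
    funext t
    simp only [Function.comp_apply, AlgHom.toLinearMap_apply, zwPair, monoPair, map_mul,
      map_prod, Phi_z, Phi_w]
  rw [this]
  exact monoPair_linearIndependent

lemma image_pair_mem {N p : ℕ} (α β : Fin p → Fin N) (hα : Function.Injective α)
    (hβ : Function.Injective β) (hd : ∀ i j, α i ≠ β j) :
    (Finset.univ.image α, Finset.univ.image β) ∈ pairSet N p := by
  rw [mem_pairSet]
  refine ⟨?_, ?_, ?_⟩
  · rw [Finset.card_image_of_injective _ hα, Finset.card_univ, Fintype.card_fin]
  · rw [Finset.card_image_of_injective _ hβ, Finset.card_univ, Fintype.card_fin]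
  · rw [Finset.disjoint_left]
    rintro x hx hx'
    simp only [Finset.mem_image] at hx hx'
    obtain ⟨i, -, rfl⟩ := hx
    obtain ⟨j, -, hj⟩ := hx'
    exact hd i j hj.symm

lemma prod_zw_eq_zwPair {N p : ℕ} (α β : Fin p → Fin N) (hα : Function.Injective α)
    (hβ : Function.Injective β) :
    (∏ i : Fin p, (zC (α i) * wC (β i)))
      = zwPair (Finset.univ.image α, Finset.univ.image β) := by
  rw [Finset.prod_mul_distrib, zwPair]
  congr 1
  · exact (Finset.prod_image fun x _ y _ h => hα h).symm
  · exact (Finset.prod_image fun x _ y _ h => hβ h).symm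

/-- the coefficients expressing `q(j,k,ε)` in terms of `z_j w_k` and `z_k w_j` -/
noncomputable def coefQ : Bool → Bool → ℂ :=
  fun e b => if e then 1/2 else if b then Complex.I/2 else -(Complex.I/2)

/-- the set `E` of products of quadratic factors -/
def ESet (N p : ℕ) : Set (MvPolynomial (Fin N ⊕ Fin N) ℝ) :=
  {P : MvPolynomial (Fin N ⊕ Fin N) ℝ |
    ∃ m : Fin (2 * p) → Fin N, Function.Injective m ∧ ∃ ε : Fin p → Bool,
      P = ∏ i : Fin p,
        qFactor (m ⟨2 * i.val, by have := i.isLt; omega⟩)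
                (m ⟨2 * i.val + 1, by have := i.isLt; omega⟩) (ε i)}

lemma mapC_mem_span_zw {N p : ℕ} (P : MvPolynomial (Fin N ⊕ Fin N) ℝ) (hP : P ∈ ESet N p) :
    mapC P ∈ Submodule.span ℂ (Set.range fun t : {x // x ∈ pairSet N p} => zwPair t.1) := by
  obtain ⟨m, hm, ε, rfl⟩ := hP
  set eIdx : Fin p → Bool → Fin (2 * p) :=
    fun i b => if b then ⟨2 * i.val, by have := i.isLt; omega⟩
      else ⟨2 * i.val + 1, by have := i.isLt; omega⟩ with heIdx
  have heInj : ∀ i b i' b', eIdx i b = eIdx i' b' → i = i' ∧ b = b' := by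
    intro i b i' b' h
    cases b <;> cases b' <;>
      simp only [heIdx, if_true, Bool.false_eq_true, if_false, Fin.mk.injEq] at h
    · exact ⟨Fin.ext (by omega), rfl⟩
    · exact absurd h (by omega)
    · exact absurd h (by omega)
    · exact ⟨Fin.ext (by omega), rfl⟩
  have key : ∀ i : Fin p,
      mapC (qFactor (m ⟨2 * i.val, by have := i.isLt; omega⟩)
          (m ⟨2 * i.val + 1, by have := i.isLt; omega⟩) (ε i))
        = ∑ b : Bool, C (coefQ (ε i) b) * (zC (m (eIdx i b)) * wC (m (eIdx i (!b)))) := by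
    intro i
    rw [Fintype.sum_bool]
    cases hε : ε i
    · rw [I2]
      simp only [coefQ, heIdx, if_true, Bool.false_eq_true, if_false, Bool.not_true,
        Bool.not_false, map_neg]
      ring
    · rw [I1]
      simp only [coefQ, heIdx, if_true, Bool.false_eq_true, if_false, Bool.not_true,
        Bool.not_false]
      ring
  rw [map_prod, Finset.prod_congr rfl fun i _ => key i, Finset.prod_univ_sum]
  apply Submodule.sum_mem
  intro g _
  have hα : Function.Injective fun i => m (eIdx i (g i)) := by
    intro i j h
    exact (heInj _ _ _ _ (hm h)).1
  have hβ : Function.Injective fun i => m (eIdx i (!(g i))) := by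
    intro i j h
    exact (heInj _ _ _ _ (hm h)).1
  have hd : ∀ i j, m (eIdx i (g i)) ≠ m (eIdx j (!(g j))) := by
    intro i j h
    obtain ⟨rfl, h2⟩ := heInj _ _ _ _ (hm h)
    simp at h2
  have hsplit : (∏ i : Fin p, C (coefQ (ε i) (g i)) * (zC (m (eIdx i (g i))) * wC (m (eIdx i (!(g i))))))
      = C (∏ i : Fin p, coefQ (ε i) (g i))
        * ∏ i : Fin p, (zC (m (eIdx i (g i))) * wC (m (eIdx i (!(g i))))) := by
    rw [Finset.prod_mul_distrib, map_prod]
  rw [hsplit, prod_zw_eq_zwPair _ _ hα hβ, ← smul_eq_C_mul]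
  exact Submodule.smul_mem _ _ (Submodule.subset_span
    ⟨⟨_, image_pair_mem _ _ hα hβ hd⟩, rfl⟩)

lemma zwPair_mem_span_mapC {N p : ℕ} (t : Finset (Fin N) × Finset (Fin N))
    (ht : t ∈ pairSet N p) :
    zwPair t ∈ Submodule.span ℂ (mapC '' ESet N p) := by
  rw [mem_pairSet] at ht
  obtain ⟨hA, hB, hdisj⟩ := ht
  set a : Fin p → Fin N := fun i => ((t.1.orderIsoOfFin hA) i : Fin N) with ha
  set b : Fin p → Fin N := fun i => ((t.2.orderIsoOfFin hB) i : Fin N) with hb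
  have hainj : Function.Injective a := fun i j h =>
    (t.1.orderIsoOfFin hA).injective (Subtype.ext h)
  have hbinj : Function.Injective b := fun i j h =>
    (t.2.orderIsoOfFin hB).injective (Subtype.ext h)
  have hamem : ∀ i, a i ∈ t.1 := fun i => ((t.1.orderIsoOfFin hA) i).2
  have hbmem : ∀ i, b i ∈ t.2 := fun i => ((t.2.orderIsoOfFin hB) i).2
  have haimg : Finset.univ.image a = t.1 := by
    apply Finset.eq_of_subset_of_card_le
    · intro x hx
      simp only [Finset.mem_image] at hx
      obtain ⟨i, -, rfl⟩ := hx
      exact hamem i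
    · rw [Finset.card_image_of_injective _ hainj, Finset.card_univ, Fintype.card_fin, hA]
  have hbimg : Finset.univ.image b = t.2 := by
    apply Finset.eq_of_subset_of_card_le
    · intro x hx
      simp only [Finset.mem_image] at hx
      obtain ⟨i, -, rfl⟩ := hx
      exact hbmem i
    · rw [Finset.card_image_of_injective _ hbinj, Finset.card_univ, Fintype.card_fin, hB]
  -- the interleaved injection
  set m : Fin (2 * p) → Fin N := fun j =>
    if h : j.val % 2 = 0 then a ⟨j.val / 2, by have := j.isLt; omega⟩
    else b ⟨j.val / 2, by have := j.isLt; omega⟩ with hmdef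
  have hma : ∀ i : Fin p, m ⟨2 * i.val, by have := i.isLt; omega⟩ = a i := by
    intro i
    rw [hmdef]
    simp only
    rw [dif_pos (by omega)]
    congr 1
    exact Fin.ext (by simp)
  have hmb : ∀ i : Fin p, m ⟨2 * i.val + 1, by have := i.isLt; omega⟩ = b i := by
    intro i
    rw [hmdef]
    simp only
    rw [dif_neg (by omega)]
    congr 1
    exact Fin.ext (by simp; omega)
  have hm : Function.Injective m := by
    intro j1 j2 h
    rw [hmdef] at h
    simp only at h
    by_cases h1 : j1.val % 2 = 0 <;> by_cases h2 : j2.val % 2 = 0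
    · rw [dif_pos h1, dif_pos h2] at h
      have := hainj h
      have := congrArg Fin.val this
      simp only at this
      exact Fin.ext (by omega)
    · rw [dif_pos h1, dif_neg h2] at h
      have hmem1 := hamem ⟨j1.val / 2, by have := j1.isLt; omega⟩
      rw [h] at hmem1
      exact absurd hmem1 (Finset.disjoint_right.mp hdisj (hbmem _))
    · rw [dif_neg h1, dif_pos h2] at h
      have hmem1 := hbmem ⟨j1.val / 2, by have := j1.isLt; omega⟩
      rw [h] at hmem1
      exact absurd hmem1 (Finset.disjoint_left.mp hdisj (hamem _))
    · rw [dif_neg h1, dif_neg h2] at h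
      have := hbinj h
      have := congrArg Fin.val this
      simp only at this
      exact Fin.ext (by omega)
  -- rewrite zwPair as a product over Fin p
  have hzw : zwPair t = ∏ i : Fin p, (zC (a i) * wC (b i)) := by
    rw [show t = (Finset.univ.image a, Finset.univ.image b) from
      Prod.ext haimg.symm hbimg.symm, prod_zw_eq_zwPair _ _ hainj hbinj]
  rw [hzw]
  have key : ∀ i : Fin p, zC (a i) * wC (b i)
      = ∑ e : Bool, C (if e then (1:ℂ) else -Complex.I) * mapC (qFactor (a i) (b i) e) := by
    intro i
    rw [Fintype.sum_bool, I3 (a i) (b i)]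
    simp only [if_true, Bool.false_eq_true, if_false, map_neg, map_one]
    ring
  rw [Finset.prod_congr rfl fun i _ => key i, Finset.prod_univ_sum]
  apply Submodule.sum_mem
  intro ε _
  have hsplit : (∏ i : Fin p, C (if ε i then (1:ℂ) else -Complex.I)
        * mapC (qFactor (a i) (b i) (ε i)))
      = C (∏ i : Fin p, if ε i then (1:ℂ) else -Complex.I)
        * mapC (∏ i : Fin p, qFactor (a i) (b i) (ε i)) := by
    rw [Finset.prod_mul_distrib, map_prod, map_prod]
  rw [hsplit, ← smul_eq_C_mul]
  apply Submodule.smul_mem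
  apply Submodule.subset_span
  refine ⟨∏ i : Fin p, qFactor (a i) (b i) (ε i), ⟨m, hm, ε, ?_⟩, rfl⟩
  exact (Finset.prod_congr rfl fun i _ => by rw [hma i, hmb i]).symm

/-- The rank of the set of `p`-pair polynomials equals `(N choose p) · ((N−p) choose p)`. -/
theorem rank_pair_polynomials (N p : ℕ) (hp : 0 < p) (hN : 2 * p ≤ N) :
    Module.finrank ℝ ↥(Submodule.span ℝ
      {P : MvPolynomial (Fin N ⊕ Fin N) ℝ |
        ∃ m : Fin (2 * p) → Fin N, Function.Injective m ∧ ∃ ε : Fin p → Bool,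
          P = ∏ i : Fin p,
            qFactor (m ⟨2 * i.val, by have := i.isLt; omega⟩)
                    (m ⟨2 * i.val + 1, by have := i.isLt; omega⟩) (ε i)}) =
      Nat.choose N p * Nat.choose (N - p) p := by
  have hset : {P : MvPolynomial (Fin N ⊕ Fin N) ℝ |
        ∃ m : Fin (2 * p) → Fin N, Function.Injective m ∧ ∃ ε : Fin p → Bool,
          P = ∏ i : Fin p,
            qFactor (m ⟨2 * i.val, by have := i.isLt; omega⟩)
                    (m ⟨2 * i.val + 1, by have := i.isLt; omega⟩) (ε i)} = ESet N p := rfl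
  rw [hset, finrank_span_mv_complexify (ESet N p)]
  have hspan : Submodule.span ℂ (⇑(MvPolynomial.map (algebraMap ℝ ℂ)) '' ESet N p)
      = Submodule.span ℂ (Set.range fun t : {x // x ∈ pairSet N p} => zwPair t.1) := by
    apply le_antisymm
    · rw [Submodule.span_le]
      rintro - ⟨P, hP, rfl⟩
      exact mapC_mem_span_zw P hP
    · rw [Submodule.span_le]
      rintro - ⟨t, rfl⟩
      exact zwPair_mem_span_mapC t.1 t.2
  rw [hspan, finrank_span_eq_card zwPair_linearIndependent, Fintype.card_coe]
  exact card_pairSet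
end

section
/- For every natural number N, the central binomial coefficient satisfies (2N choose N) = Σ_{p=0}^{⌊N/2⌋} (N choose 2p) · ((2p) choose p) · 2^{N−2p}. Equivalently, (2N choose N) = Σ_{p=0}^{⌊N/2⌋} N! · 2^{N−2p} / (p! · p! · (N−2p)!). -/
open Polynomial Finset

/-- The central binomial coefficient identity
`(2N choose N) = Σ_{p=0}^{⌊N/2⌋} (N choose 2p) · (2p choose p) · 2^{N−2p}`. -/
theorem central_binom_eq_sum (N : ℕ) :
    Nat.choose (2 * N) N =
      ∑ p ∈ Finset.range (N / 2 + 1),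
        Nat.choose N (2 * p) * Nat.choose (2 * p) p * 2 ^ (N - 2 * p) := by
  have key : Nat.choose (2 * N) N
      = ∑ k ∈ range (N + 1),
          Nat.choose k (N - k) * 2 ^ (2 * k - N) * Nat.choose N k := by
    have h0 : ((2 * N).choose N : ℕ) = ((X + 1 : Polynomial ℕ) ^ (2 * N)).coeff N := by
      rw [coeff_X_add_one_pow, Nat.cast_id]
    have h1 : ((X + 1 : Polynomial ℕ) ^ (2 * N)) = ((X ^ 2 + C 2 * X) + 1) ^ N := by
      rw [pow_mul]
      congr 1
      simp [C_eq_natCast]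
      ring
    rw [h0, h1, add_pow, finset_sum_coeff]
    apply Finset.sum_congr rfl
    intro k hk
    have hkN : k ≤ N := by simpa using Nat.lt_succ_iff.mp (mem_range.mp hk)
    have h2 : (X ^ 2 + C 2 * X : Polynomial ℕ) ^ k = X ^ k * (X + C 2) ^ k := by
      rw [← mul_pow]; ring
    have hc : (X ^ k * ((X + C 2 : Polynomial ℕ)) ^ k).coeff N
        = 2 ^ (2 * k - N) * Nat.choose k (N - k) := by
      conv_lhs => rw [show N = (N - k) + k from by omega]
      rw [coeff_X_pow_mul, coeff_X_add_C_pow,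
        show k - (N - k) = 2 * k - N from by omega]
      simp
    rw [h2, one_pow, mul_one, ← C_eq_natCast, coeff_mul_C, hc, Nat.cast_id]
    ring
  rw [key, ← Finset.sum_range_reflect]
  have step : ∀ p ∈ range (N + 1),
      Nat.choose (N - p) (N - (N - p)) * 2 ^ (2 * (N - p) - N) * Nat.choose N (N - p)
        = Nat.choose N (2 * p) * Nat.choose (2 * p) p * 2 ^ (N - 2 * p) := by
    intro p hp
    have hpN : p ≤ N := by simpa using Nat.lt_succ_iff.mp (mem_range.mp hp)
    have h1 : N - (N - p) = p := by omega
    rw [h1, Nat.choose_symm hpN]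
    by_cases h : 2 * p ≤ N
    · have h2 : 2 * (N - p) - N = N - 2 * p := by omega
      have h3 : Nat.choose N (2 * p) * Nat.choose (2 * p) p
          = Nat.choose N p * Nat.choose (N - p) p :=
        (Nat.choose_mul (n := N) (k := 2 * p) (s := p) (by omega)).trans (by rw [show 2 * p - p = p by omega])
      rw [h2, h3]; ring
    · have h4 : Nat.choose (N - p) p = 0 := Nat.choose_eq_zero_of_lt (by omega)
      have h5 : Nat.choose N (2 * p) = 0 := Nat.choose_eq_zero_of_lt (by omega)
      simp [h4, h5]
  rw [Finset.sum_congr rfl (by simpa using step)]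
  symm
  apply Finset.sum_subset
  · exact Finset.range_subset_range.mpr (by omega)
  · intro p _ hp
    have : 2 * p > N := by
      have := mem_range.not.mp hp; omega
    simp [Nat.choose_eq_zero_of_lt (by omega : N < 2 * p)]
end
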